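/- Let n₁, n₂ be integers with n₁ > 4 and n₂ > 4, let n = n₁ + n₂, and let a₀ > 0 be a real constant. Then log Γ(n₁/2 + a₀) + log Γ(n₂/2 + a₀) - log Γ(n/2 + a₀) ≤ 2(1 - log 2) - a₀ + a₀·log(n/2 + a₀) + (((n₁-1)/2) + a₀)·log((n₁ + 2a₀)/(n + 2a₀)) + (((n₂-1)/2) + a₀)·log((n₂ + 2a₀)/(n + 2a₀)). -/

import Mathlib

open Real Topology Filter

lemma mono_aux {f f' : ℝ → ℝ} (hf : ∀ v : ℝ, 0 ≤ v → HasDerivAt f (f' v) v)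
    (h0 : ∀ v : ℝ, 0 < v → 0 ≤ f' v) : MonotoneOn f (Set.Ici 0) := by
  apply monotoneOn_of_deriv_nonneg (convex_Ici 0)
  · exact fun v hv => (hf v hv).continuousAt.continuousWithinAt
  · intro v hv
    rw [interior_Ici] at hv
    exact (hf v (le_of_lt hv)).differentiableAt.differentiableWithinAt
  · intro v hv
    rw [interior_Ici] at hv
    rw [(hf v (le_of_lt hv)).deriv]
    exact h0 v hv

-- lower: 2v ≤ (2+v) log(1+v) for v ≥ 0
lemma log_lb (v : ℝ) (hv : 0 ≤ v) : 2*v ≤ (2+v) * Real.log (1+v) := by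
  have key : MonotoneOn (fun v : ℝ => (2+v) * Real.log (1+v) - 2*v) (Set.Ici 0) := by
    apply mono_aux (f' := fun v => Real.log (1+v) + (2+v) * (1/(1+v)) - 2)
    · intro v hv
      have h1 : (1:ℝ) + v ≠ 0 := by positivity
      have := (((hasDerivAt_id v).const_add 2).mul
        (((hasDerivAt_id v).const_add 1).log (by simpa using h1))).sub
        ((hasDerivAt_id v).const_mul 2)
      refine this.congr_deriv ?_
      simp [id]
    · intro v hv
      have h1 : (0:ℝ) < 1 + v := by linarith
      have h2 : Real.log (1/(1+v)) ≤ 1/(1+v) - 1 := Real.log_le_sub_one_of_pos (by positivity)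
      rw [Real.log_div one_ne_zero (ne_of_gt h1), Real.log_one] at h2
      have h3 : (2+v) * (1/(1+v)) = 1 + 1/(1+v) := by field_simp; ring
      nlinarith
  have := key (Set.self_mem_Ici) (Set.mem_Ici.mpr hv) hv
  simpa using this

-- upper: 2(1+v) log(1+v) ≤ v(2+v) for v ≥ 0
lemma log_ub (v : ℝ) (hv : 0 ≤ v) : 2*(1+v) * Real.log (1+v) ≤ v*(2+v) := by
  have key : MonotoneOn (fun v : ℝ => v*(2+v) - 2*(1+v) * Real.log (1+v)) (Set.Ici 0) := by
    apply mono_aux (f' := fun v => 2*v - 2 * Real.log (1+v))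
    · intro v hv
      have h1 : (1:ℝ) + v ≠ 0 := by positivity
      have hlog := ((hasDerivAt_id v).const_add 1).log (by simpa using h1)
      have := ((hasDerivAt_id v).mul ((hasDerivAt_id v).const_add 2)).sub
        ((((hasDerivAt_id v).const_add 1).const_mul 2).mul hlog)
      refine this.congr_deriv ?_
      simp [id]
      field_simp
      ring
    · intro v hv
      have h2 : Real.log (1+v) ≤ 1+v - 1 := Real.log_le_sub_one_of_pos (by linarith)
      linarith
  have := key (Set.self_mem_Ici) (Set.mem_Ici.mpr hv) hv
  simpa using this

lemma log_sub_log (y : ℝ) (hy : 0 < y) : Real.log (y+1) - Real.log y = Real.log (1+1/y) := by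
  rw [← Real.log_div (by linarith) (ne_of_gt hy)]
  congr 1
  field_simp

lemma t_lb (y : ℝ) (hy : 0 < y) : 1 ≤ (y+1/2) * (Real.log (y+1) - Real.log y) := by
  rw [log_sub_log y hy]
  have h := log_lb (1/y) (by positivity)
  have h2 := mul_le_mul_of_nonneg_left h (le_of_lt (half_pos hy))
  calc (1:ℝ) = y/2 * (2*(1/y)) := by field_simp
  _ ≤ y/2 * ((2+1/y) * Real.log (1+1/y)) := h2
  _ = (y+1/2) * Real.log (1+1/y) := by field_simp

lemma t_ub (y : ℝ) (hy : 0 < y) :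
    (y+1/2) * (Real.log (y+1) - Real.log y) ≤ 1 + (1/4)*(1/y - 1/(y+1)) := by
  rw [log_sub_log y hy]
  have h := log_ub (1/y) (by positivity)
  have hc : (0:ℝ) < y*(2*y+1)/(4*(y+1)) := by positivity
  have h2 := mul_le_mul_of_nonneg_left h (le_of_lt hc)
  calc (y+1/2) * Real.log (1+1/y)
      = y*(2*y+1)/(4*(y+1)) * (2*(1+1/y) * Real.log (1+1/y)) := by field_simp; ring
  _ ≤ y*(2*y+1)/(4*(y+1)) * ((1/y)*(2+1/y)) := h2
  _ = 1 + (1/4)*(1/y - 1/(y+1)) := by field_simp; ring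

noncomputable def tt (y : ℝ) : ℝ := (y+1/2) * (Real.log (y+1) - Real.log y) - 1
noncomputable def Tn (x : ℝ) (n : ℕ) : ℝ := ∑ j ∈ Finset.range n, tt (x + j)
noncomputable def Gg (y : ℝ) : ℝ := y * Real.log y - y

lemma Tn_nonneg (x : ℝ) (hx : 0 < x) (n : ℕ) : 0 ≤ Tn x n := by
  apply Finset.sum_nonneg
  intro j _
  have : (0:ℝ) < x + j := by positivity
  have := t_lb (x+j) this
  simp only [tt]
  linarith

lemma Tn_le (x : ℝ) (hx : 0 < x) (n : ℕ) : Tn x n ≤ (1/4)*(1/x - 1/(x+n)) := by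
  induction n with
  | zero => simp [Tn]
  | succ n ih =>
    rw [Tn, Finset.sum_range_succ, ← Tn]
    have hxn : (0:ℝ) < x + n := by positivity
    have h := t_ub (x+n) hxn
    have : tt (x+n) ≤ (1/4)*(1/(x+n) - 1/(x+n+1)) := by simp only [tt]; linarith
    push_cast
    have e : x + (↑n + 1) = (x + ↑n) + 1 := by ring
    rw [e]
    linarith

lemma sum_log_eq (x : ℝ) (hx : 0 < x) (n : ℕ) :
    ∑ j ∈ Finset.range (n+1), Real.log (x+j)
      = (1/2)*(Real.log x + Real.log (x+n)) + (Gg (x+n) - Gg x) - Tn x n := by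
  induction n with
  | zero => simp [Tn, Gg]; ring
  | succ n ih =>
    rw [Finset.sum_range_succ, ih, show Tn x (n+1) = Tn x n + tt (x+n) from Finset.sum_range_succ _ n]
    have hxn : (0:ℝ) < x + n := by positivity
    have e1 : x + (↑(n+1) : ℝ) = (x + ↑n) + 1 := by push_cast; ring
    rw [e1]
    simp only [Gg, tt]
    ring

lemma logGammaSeq_eq (x : ℝ) (hx : 0 < x) (n : ℕ) (hn : 1 ≤ n) :
    Real.log (Real.GammaSeq x n) = ((x-1/2)*Real.log x - x) + (1/2)*Real.log 2 + x
      - (x + n + 1/2)*Real.log (1+x/n) + Real.log (Stirling.stirlingSeq n) + Tn x n := by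
  have hn0 : (0:ℝ) < n := by exact_mod_cast hn
  have hprod : (0:ℝ) < ∏ j ∈ Finset.range (n+1), (x + j) := by
    apply Finset.prod_pos; intro j _; positivity
  have hlog1 : Real.log (Real.GammaSeq x n)
      = x * Real.log n + Real.log (Nat.factorial n : ℝ) - ∑ j ∈ Finset.range (n+1), Real.log (x+j) := by
    rw [Real.GammaSeq, Real.log_div (by positivity) (ne_of_gt hprod),
      Real.log_mul (by positivity) (by exact_mod_cast (Nat.factorial_pos n).ne'),
      Real.log_rpow hn0, Real.log_prod]
    intro j _
    have : (0:ℝ) < x + j := by positivity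
    exact ne_of_gt this
  have hstir := Stirling.log_stirlingSeq_formula n
  have hfact : Real.log (Nat.factorial n : ℝ) = Real.log (Stirling.stirlingSeq n)
      + 1/2 * Real.log (2*n) + n * Real.log ((n:ℝ) / Real.exp 1) := by
    rw [hstir]; ring
  have hxn : Real.log (x + n) = Real.log n + Real.log (1 + x/n) := by
    rw [← Real.log_mul (ne_of_gt hn0) (by positivity)]
    congr 1
    field_simp
    ring
  have h2n : Real.log (2*(n:ℝ)) = Real.log 2 + Real.log n :=
    Real.log_mul two_ne_zero (ne_of_gt hn0)
  have hne : Real.log ((n:ℝ) / Real.exp 1) = Real.log n - 1 := by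
    rw [Real.log_div (ne_of_gt hn0) (Real.exp_ne_zero 1), Real.log_exp]
  rw [hlog1, hfact, sum_log_eq x hx n, hxn, h2n, hne, Gg, Gg, hxn]
  ring

lemma sqrtpi_le_stirlingSeq (n : ℕ) (hn : 1 ≤ n) : Real.sqrt π ≤ Stirling.stirlingSeq n := by
  obtain ⟨m, rfl⟩ := Nat.exists_eq_add_of_le hn
  have h := Stirling.stirlingSeq'_antitone
  have hlim : Filter.Tendsto (Stirling.stirlingSeq ∘ Nat.succ) Filter.atTop (𝓝 (Real.sqrt π)) :=
    Stirling.tendsto_stirlingSeq_sqrt_pi.comp (Filter.tendsto_add_atTop_nat 1)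
  have := h.le_of_tendsto hlim m
  simpa [Nat.succ_eq_add_one, Nat.add_comm] using this

lemma gamma_bounds (x : ℝ) (hx : 0 < x) :
    ((x-1/2)*Real.log x - x) + (1/2)*Real.log 2 + (1/2)*Real.log π ≤ Real.log (Real.Gamma x) ∧
    Real.log (Real.Gamma x) ≤ ((x-1/2)*Real.log x - x) + (1/2)*Real.log 2 + (1/2)*Real.log π
      + 1/(4*x) := by
  set g : ℝ := (x-1/2)*Real.log x - x with hg
  set c : ℝ := Real.log (Real.Gamma x) - g - (1/2)*Real.log 2 - (1/2)*Real.log π with hc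
  have hΓ : 0 < Real.Gamma x := Real.Gamma_pos_of_pos hx
  -- the sequence T' tends to c
  have h1 : Filter.Tendsto (fun n : ℕ => Real.log (Real.GammaSeq x n)) Filter.atTop
      (𝓝 (Real.log (Real.Gamma x))) :=
    ((Real.continuousAt_log (ne_of_gt hΓ)).tendsto).comp (Real.GammaSeq_tendsto_Gamma x)
  have h2 : Filter.Tendsto (fun n : ℕ => Real.log (Stirling.stirlingSeq n)) Filter.atTop
      (𝓝 ((1/2)*Real.log π)) := by
    have hs : (0:ℝ) < Real.sqrt π := Real.sqrt_pos.mpr Real.pi_pos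
    have := ((Real.continuousAt_log (ne_of_gt hs)).tendsto).comp
      Stirling.tendsto_stirlingSeq_sqrt_pi
    rwa [Real.log_sqrt (le_of_lt Real.pi_pos), div_eq_mul_inv, mul_comm,
      show (2:ℝ)⁻¹ = 1/2 by norm_num] at this
  have h3 : Filter.Tendsto (fun n : ℕ => ((x + n + 1/2) * Real.log (1 + x/n))) Filter.atTop
      (𝓝 x) := by
    have ha : Filter.Tendsto (fun n : ℕ => (n:ℝ) * Real.log (1 + x/n)) Filter.atTop (𝓝 x) :=
      (Real.tendsto_mul_log_one_add_div_atTop x).comp tendsto_natCast_atTop_atTop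
    have hb : Filter.Tendsto (fun n : ℕ => Real.log (1 + x/n)) Filter.atTop (𝓝 0) := by
      have hd : Filter.Tendsto (fun n : ℕ => 1 + x/n) Filter.atTop (𝓝 1) := by
        simpa using (tendsto_const_nhds (x := (1:ℝ))).add (tendsto_const_div_atTop_nhds_zero_nat x)
      have := ((Real.continuousAt_log one_ne_zero).tendsto).comp hd
      simpa [Function.comp_def] using this
    have hcomb : Filter.Tendsto (fun n : ℕ => (n:ℝ) * Real.log (1 + x/n)
        + (x + 1/2) * Real.log (1 + x/n)) Filter.atTop (𝓝 (x + (x+1/2) * 0)) :=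
      ha.add (hb.const_mul (x+1/2))
    simp only [mul_zero, add_zero] at hcomb
    apply hcomb.congr
    intro n
    ring
  have hT : Filter.Tendsto (fun n : ℕ => Real.log (Real.GammaSeq x n) - (g + (1/2)*Real.log 2 + x
      - (x + n + 1/2)*Real.log (1+x/n) + Real.log (Stirling.stirlingSeq n))) Filter.atTop
      (𝓝 c) := by
    have := (h1.sub (((tendsto_const_nhds (x := g + (1/2)*Real.log 2 + x)).sub h3).add h2))
    convert this using 2
    rw [hc]; ring
  have heq : ∀ n : ℕ, 1 ≤ n → Real.log (Real.GammaSeq x n) - (g + (1/2)*Real.log 2 + x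
      - (x + n + 1/2)*Real.log (1+x/n) + Real.log (Stirling.stirlingSeq n)) = Tn x n := by
    intro n hn
    rw [logGammaSeq_eq x hx n hn, hg]
    ring
  have hc0 : 0 ≤ c := by
    apply ge_of_tendsto hT
    filter_upwards [Filter.eventually_ge_atTop 1] with n hn
    rw [heq n hn]
    exact Tn_nonneg x hx n
  have hc1 : c ≤ 1/(4*x) := by
    apply le_of_tendsto hT
    filter_upwards [Filter.eventually_ge_atTop 1] with n hn
    rw [heq n hn]
    have h := Tn_le x hx n
    have : (0:ℝ) < x + n := by positivity
    have h5 : (0:ℝ) < 1/(x+n) := by positivity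
    have h6 : 1/(4*x) = 1/4 * (1/x) := by field_simp
    calc Tn x n ≤ (1/4)*(1/x - 1/(x+n)) := h
    _ ≤ 1/(4*x) := by rw [h6]; linarith
  constructor
  · rw [hc] at hc0; linarith
  · rw [hc] at hc1; linarith

lemma numeric_final (x₁ x₂ X : ℝ) (h1 : 5/2 ≤ x₁) (h2 : 5/2 ≤ x₂) (hX : 5 ≤ X) :
    (1/2)*Real.log 2 + (1/2)*Real.log π + 1/(4*x₁) + 1/(4*x₂)
      ≤ 2 - 2*Real.log 2 + (1/2)*Real.log X := by
  have hl2 : Real.log 2 < 0.6931471808 := Real.log_two_lt_d9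
  have ha : 1/(4*x₁) ≤ 1/10 := by
    apply one_div_le_one_div_of_le <;> linarith
  have hb : 1/(4*x₂) ≤ 1/10 := by
    apply one_div_le_one_div_of_le <;> linarith
  have hX5 : Real.log 5 ≤ Real.log X := Real.log_le_log (by norm_num) hX
  have h54 : (0.2:ℝ) ≤ Real.log (5/4) := by
    have := Real.log_le_sub_one_of_pos (show (0:ℝ) < 4/5 by norm_num)
    have e : Real.log (5/4) = - Real.log (4/5) := by
      rw [← Real.log_inv]; norm_num
    rw [e]; linarith
  have h5 : 2*Real.log 2 + 0.2 ≤ Real.log 5 := by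
    have e : (5:ℝ) = 4 * (5/4) := by norm_num
    rw [e, Real.log_mul (by norm_num) (by norm_num),
      show (4:ℝ) = 2^2 by norm_num, Real.log_pow]
    push_cast
    linarith
  have hpi : Real.log π ≤ Real.log 2 + 0.575 := by
    have hp2 : Real.log (π/2) ≤ π/2 - 1 := Real.log_le_sub_one_of_pos (by positivity)
    have : Real.log (π/2) = Real.log π - Real.log 2 :=
      Real.log_div (ne_of_gt Real.pi_pos) two_ne_zero
    have hpi315 := Real.pi_lt_d2
    linarith
  linarith


lemma main_aux (x₁ x₂ X a₀ : ℝ) (hx1 : 5/2 ≤ x₁) (hx2 : 5/2 ≤ x₂) (hX : 5 ≤ X)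
    (hXe : X = x₁ + x₂ - a₀) :
    Real.log (Real.Gamma x₁) + Real.log (Real.Gamma x₂) - Real.log (Real.Gamma X) ≤
      2*(1-Real.log 2) - a₀ + a₀ * Real.log X
        + (x₁-1/2)*(Real.log x₁ - Real.log X) + (x₂-1/2)*(Real.log x₂ - Real.log X) := by
  have hx1p : (0:ℝ) < x₁ := by linarith
  have hx2p : (0:ℝ) < x₂ := by linarith
  have hXp : (0:ℝ) < X := by linarith
  have hu1 := (gamma_bounds x₁ hx1p).2
  have hu2 := (gamma_bounds x₂ hx2p).2
  have hlX := (gamma_bounds X hXp).1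
  have hnum := numeric_final x₁ x₂ X hx1 hx2 hX
  subst hXe
  linarith

theorem logGamma_sum_upper (n₁ n₂ : ℕ) (h₁ : 4 < n₁) (h₂ : 4 < n₂) (a₀ : ℝ) (ha : 0 < a₀) :
    Real.log (Real.Gamma ((n₁ : ℝ) / 2 + a₀)) + Real.log (Real.Gamma ((n₂ : ℝ) / 2 + a₀))
      - Real.log (Real.Gamma (((n₁ : ℝ) + (n₂ : ℝ)) / 2 + a₀)) ≤
    2 * (1 - Real.log 2) - a₀ + a₀ * Real.log (((n₁ : ℝ) + (n₂ : ℝ)) / 2 + a₀)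
      + (((n₁ : ℝ) - 1) / 2 + a₀) *
          Real.log (((n₁ : ℝ) + 2 * a₀) / ((n₁ : ℝ) + (n₂ : ℝ) + 2 * a₀))
      + (((n₂ : ℝ) - 1) / 2 + a₀) *
          Real.log (((n₂ : ℝ) + 2 * a₀) / ((n₁ : ℝ) + (n₂ : ℝ) + 2 * a₀)) := by
  have hN1 : (5:ℝ) ≤ (n₁:ℝ) := by exact_mod_cast h₁
  have hN2 : (5:ℝ) ≤ (n₂:ℝ) := by exact_mod_cast h₂
  have hd1 : ((n₁:ℝ) + (n₂:ℝ) + 2*a₀) ≠ 0 := by positivity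
  have hd2 : (((n₁:ℝ) + (n₂:ℝ))/2 + a₀) ≠ 0 := by positivity
  have hx1p : (0:ℝ) < (n₁:ℝ)/2 + a₀ := by linarith
  have hx2p : (0:ℝ) < (n₂:ℝ)/2 + a₀ := by linarith
  have hXp : (0:ℝ) < ((n₁:ℝ) + (n₂:ℝ))/2 + a₀ := by linarith
  have hr1 : ((n₁:ℝ) + 2*a₀) / ((n₁:ℝ) + (n₂:ℝ) + 2*a₀)
      = ((n₁:ℝ)/2 + a₀) / (((n₁:ℝ) + (n₂:ℝ))/2 + a₀) := by
    rw [div_eq_div_iff hd1 hd2]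
    ring
  have hr2 : ((n₂:ℝ) + 2*a₀) / ((n₁:ℝ) + (n₂:ℝ) + 2*a₀)
      = ((n₂:ℝ)/2 + a₀) / (((n₁:ℝ) + (n₂:ℝ))/2 + a₀) := by
    rw [div_eq_div_iff hd1 hd2]
    ring
  rw [hr1, hr2, Real.log_div (ne_of_gt hx1p) hd2, Real.log_div (ne_of_gt hx2p) hd2,
    show ((n₁:ℝ) - 1)/2 + a₀ = ((n₁:ℝ)/2 + a₀) - 1/2 by ring,
    show ((n₂:ℝ) - 1)/2 + a₀ = ((n₂:ℝ)/2 + a₀) - 1/2 by ring]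
  exact main_aux ((n₁:ℝ)/2 + a₀) ((n₂:ℝ)/2 + a₀) (((n₁:ℝ) + (n₂:ℝ))/2 + a₀) a₀
    (by linarith) (by linarith) (by linarith) (by ring)
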